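/- Let k ≥ 2 and a_1,...,a_k ≥ 1 be fixed natural numbers. Then there exists p_0 such that for every integer p > p_0, the complete multipartite graph K_{p·a_1,...,p·a_k} has an embedded K_{a_1,...,a_k}-decomposition. -/

import Mathlib

open Finset Function

/-- An "orthogonal-array" style transversal design: a family of transversal blocks
(functions from groups to points) covering every cross pair exactly once. -/
def IsTD {α : Type} {ι : Type} (K : ℕ) (F : ι → Fin K → α) : Prop :=
  ∀ i j : Fin K, i ≠ j → ∀ a b : α, ∃! t : ι, F t i = a ∧ F t j = b

/-- Existence of a transversal design TD(K, n). -/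
def TDex (K n : ℕ) : Prop :=
  ∃ (α ι : Type) (_ : Fintype α), Fintype.card α = n ∧ ∃ F : ι → Fin K → α, IsTD K F

lemma isTD_comp_equiv {α β ι : Type} {K : ℕ} {F : ι → Fin K → α} (h : IsTD K F)
    (e : α ≃ β) : IsTD K (fun t i => e (F t i)) := by
  intro i j hij a b
  obtain ⟨t, ⟨h1, h2⟩, hu⟩ := h i j hij (e.symm a) (e.symm b)
  refine ⟨t, ⟨by simp [h1], by simp [h2]⟩, ?_⟩
  intro t' ⟨h1', h2'⟩
  exact hu t' ⟨by simpa using congrArg e.symm h1', by simpa using congrArg e.symm h2'⟩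

/-- Transport a TD to any concrete carrier of the right cardinality. -/
lemma TDex.toCarrier {K n : ℕ} (h : TDex K n) (β : Type) [Fintype β]
    (hb : Fintype.card β = n) :
    ∃ (ι : Type) (F : ι → Fin K → β), IsTD K F := by
  obtain ⟨α, ι, hfin, hcard, F, hF⟩ := h
  refine ⟨ι, ?_⟩
  have e : α ≃ β := @Fintype.equivOfCardEq α β hfin _ (by rw [hcard, hb])
  exact ⟨fun t i => e (F t i), isTD_comp_equiv hF e⟩

lemma tdex_of_isTD {α ι : Type} [Fintype α] {K : ℕ} {F : ι → Fin K → α} (h : IsTD K F) :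
    TDex K (Fintype.card α) :=
  ⟨α, ι, inferInstance, rfl, F, h⟩

/-- Deleting groups. -/
lemma isTD_comp_embedding {α ι : Type} {K K' : ℕ} {F : ι → Fin K → α} (h : IsTD K F)
    (ψ : Fin K' ↪ Fin K) : IsTD K' (fun t i => F t (ψ i)) := by
  intro i j hij a b
  exact h (ψ i) (ψ j) (fun hc => hij (ψ.injective hc)) a b

lemma TDex.mono {K K' n : ℕ} (hK : K' ≤ K) (h : TDex K n) : TDex K' n := by
  obtain ⟨α, ι, hfin, hcard, F, hF⟩ := h
  exact ⟨α, ι, hfin, hcard, fun t i => F t (Fin.castLEEmb hK i),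
    isTD_comp_embedding hF (Fin.castLEEmb hK)⟩

/-- Degenerate designs for `K ≤ 1`. -/
lemma tdex_of_K_le_one {K n : ℕ} (hK : K ≤ 1) : TDex K n := by
  refine ⟨Fin n, Empty, inferInstance, by simp, fun t => t.elim, ?_⟩
  intro i j hij
  interval_cases K
  · exact absurd (Subsingleton.elim (α := Fin 0) i j) hij
  · exact absurd (Subsingleton.elim (α := Fin 1) i j) hij
  
/-- TD(K, 1). -/
lemma tdex_one (K : ℕ) : TDex K 1 := by
  refine ⟨Fin 1, PUnit, inferInstance, by simp, fun _ _ => 0, ?_⟩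
  intro i j hij a b
  refine ⟨PUnit.unit, ⟨Subsingleton.elim _ _, Subsingleton.elim _ _⟩, fun t _ => rfl⟩

/-- Product construction. -/
lemma TDex.mul {K m n : ℕ} (hm : TDex K m) (hn : TDex K n) : TDex K (m * n) := by
  obtain ⟨α, ι, hfa, hca, F, hF⟩ := hm
  obtain ⟨β, κ, hfb, hcb, G, hG⟩ := hn
  refine ⟨α × β, ι × κ, @instFintypeProd α β hfa hfb, ?_, fun t i => (F t.1 i, G t.2 i), ?_⟩
  · rw [@Fintype.card_prod α β hfa hfb, hca, hcb]
  · intro i j hij a b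
    obtain ⟨t1, ⟨ht1a, ht1b⟩, hu1⟩ := hF i j hij a.1 b.1
    obtain ⟨t2, ⟨ht2a, ht2b⟩, hu2⟩ := hG i j hij a.2 b.2
    refine ⟨(t1, t2), ⟨by simp [ht1a, ht2a], by simp [ht1b, ht2b]⟩, ?_⟩
    rintro ⟨s1, s2⟩ ⟨hs1, hs2⟩
    have e1 : s1 = t1 := hu1 s1 ⟨congrArg Prod.fst hs1, congrArg Prod.fst hs2⟩
    have e2 : s2 = t2 := hu2 s2 ⟨congrArg Prod.snd hs1, congrArg Prod.snd hs2⟩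
    simp [e1, e2]

/-- Field construction: TD(K, q) for a prime power q ≥ K. -/
lemma tdex_field {K q : ℕ} (hq : IsPrimePow q) (hKq : K ≤ q) : TDex K q := by
  obtain ⟨p, e, hp, he, rfl⟩ := hq
  haveI : Fact (Nat.Prime p) := ⟨hp.nat_prime⟩
  set α := GaloisField p e
  haveI : Fintype α := Fintype.ofFinite α
  have hcard : Fintype.card α = p ^ e := by
    have h2 := GaloisField.card p e (by omega : e ≠ 0)
    rwa [Nat.card_eq_fintype_card] at h2
  -- an injection Fin K ↪ α
  have hKcard : K ≤ Fintype.card α := by rw [hcard]; exact hKq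
  obtain ⟨c⟩ : Nonempty (Fin K ↪ α) := by
    have := Fintype.card_fin K ▸ hKcard
    exact Function.Embedding.nonempty_of_card_le (by simpa using hKcard)
  refine ⟨α, α × α, inferInstance, hcard, fun t i => t.1 * c i + t.2, ?_⟩
  intro i j hij a b
  have hc : c i - c j ≠ 0 := sub_ne_zero.mpr (fun hc => hij (c.injective hc))
  have key : ∀ s r : α, (s * c i + r = a ∧ s * c j + r = b) ↔
      (s = (a - b) / (c i - c j) ∧ r = a - (a - b) / (c i - c j) * c i) := by
    intro s r
    constructor
    · rintro ⟨h1, h2⟩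
      have hsv : s * (c i - c j) = a - b := by rw [← h1, ← h2]; ring
      have hs : s = (a - b) / (c i - c j) := by
        rw [← hsv, mul_div_assoc, div_self hc, mul_one]
      exact ⟨hs, by rw [← hs, ← h1]; ring⟩
    · rintro ⟨hs, hr⟩
      subst hs; subst hr
      constructor
      · ring
      · linear_combination (-1 : α) * div_mul_cancel₀ (a - b) hc
  refine ⟨((a - b) / (c i - c j), a - (a - b) / (c i - c j) * c i), ?_, ?_⟩
  · exact (key _ _).mpr ⟨rfl, rfl⟩
  · rintro ⟨s, r⟩ hsr
    have := (key s r).mp hsr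
    simp only [Prod.mk.injEq]
    exact ⟨this.1, this.2⟩

def AllCompBig (K n : ℕ) : Prop :=
  ∀ p : ℕ, p.Prime → p ∣ n → K ≤ p ^ (n.factorization p)

section MacNeishNT
variable {K n : ℕ}

lemma allCompBig_of_coprime_primorial {K n : ℕ} (hn : n ≠ 0)
    (h : ∀ p : ℕ, p.Prime → p < K → ¬ p ∣ n) : AllCompBig K n := by
  intro p hp hpn
  have hpK : K ≤ p := by
    by_contra hlt
    exact h p hp (by omega) hpn
  calc K ≤ p := hpK
  _ = p ^ 1 := (pow_one p).symm
  _ ≤ p ^ (n.factorization p) := by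
      apply Nat.pow_le_pow_right hp.pos
      exact hp.factorization_pos_of_dvd hn hpn

lemma allCompBig_ordCompl {p : ℕ} (hp : p.Prime) (hn : n ≠ 0) (h : AllCompBig K n) :
    AllCompBig K (n / p ^ n.factorization p) := by
  intro q hq hqd
  have hqn : q ∣ n := hqd.trans (Nat.ordCompl_dvd n p)
  have hqp : q ≠ p := by
    rintro rfl
    exact Nat.not_dvd_ordCompl hq hn hqd
  have : (n / p ^ n.factorization p).factorization q = n.factorization q := by
    rw [Nat.factorization_ordCompl]
    simp [Finsupp.erase_ne hqp]
  rw [this]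
  exact h q hq hqn
end MacNeishNT

lemma tdex_of_allCompBig {K : ℕ} : ∀ n : ℕ, 1 ≤ n → AllCompBig K n → TDex K n := by
  intro n
  induction n using Nat.strong_induction_on with
  | _ n ih =>
    intro hn hbig
    rcases eq_or_lt_of_le hn with h1 | h1
    · exact h1 ▸ tdex_one K
    · have hn1 : n ≠ 1 := by omega
      have hn0 : n ≠ 0 := by omega
      set p := n.minFac with hp_def
      have hp : p.Prime := Nat.minFac_prime hn1
      have hpd : p ∣ n := Nat.minFac_dvd n
      set e := n.factorization p with he_def
      have he : 1 ≤ e := hp.factorization_pos_of_dvd hn0 hpd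
      set m := n / p ^ e with hm_def
      have hqm : p ^ e * m = n := Nat.ordProj_mul_ordCompl_eq_self n p
      have hq1 : 1 < p ^ e := by
        calc 1 < p := hp.one_lt
        _ = p ^ 1 := (pow_one p).symm
        _ ≤ p ^ e := Nat.pow_le_pow_right hp.pos he
      have hm1 : 1 ≤ m := by
        rcases Nat.eq_zero_or_pos m with h | h
        · exfalso; rw [h, mul_zero] at hqm; omega
        · exact h
      have hmn : m < n := by nlinarith
      have h1 : TDex K (p ^ e) :=
        tdex_field ⟨p, e, hp.prime, he, rfl⟩ (hbig p hp hpd)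
      have h2 : TDex K m := ih m hmn hm1 (allCompBig_ordCompl hp hn0 hbig)
      exact hqm ▸ h1.mul h2

section Triple
/-- The CRT-engineered base for the MacNeish triple. -/
def Qprod (K : ℕ) : ℕ :=
  ∏ p ∈ (Finset.range (K+1)).filter (fun p => p.Prime ∧ 2 < p), p ^ (Nat.log p K + 1)

def xhat (K : ℕ) : ℕ := Qprod K + 1

lemma Qprod_pos (K : ℕ) : 1 ≤ Qprod K := by
  apply Finset.one_le_prod'
  intro p hp
  simp only [Finset.mem_filter, Finset.mem_range] at hp
  exact Nat.one_le_pow _ _ hp.2.1.pos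

lemma Qprod_odd (K : ℕ) : ¬ 2 ∣ Qprod K := by
  intro h
  unfold Qprod at h
  rw [Prime.dvd_finset_prod_iff (Nat.prime_two.prime)] at h
  obtain ⟨p, hp, hdvd⟩ := h
  simp only [Finset.mem_filter, Finset.mem_range] at hp
  have := Nat.Prime.dvd_of_dvd_pow (n := Nat.log p K + 1) Nat.prime_two hdvd
  have h2 := (Nat.prime_dvd_prime_iff_eq Nat.prime_two hp.2.1).mp this
  omega

lemma dvd_Qprod {K p : ℕ} (hp : p.Prime) (h2 : 2 < p) (hpK : p ≤ K) :
    p ^ (Nat.log p K + 1) ∣ Qprod K := by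
  apply dvd_prod_of_mem
  simp only [Finset.mem_filter, Finset.mem_range]
  exact ⟨by omega, hp, h2⟩

lemma xhat_even (K : ℕ) : 2 ∣ xhat K := by
  have h1 := Qprod_odd K
  have : Qprod K % 2 = 1 := by omega
  unfold xhat; omega

lemma xhat_ge_two (K : ℕ) : 2 ≤ xhat K := by
  have := Qprod_pos K; unfold xhat; omega

lemma allCompBig_xhat_pow {K : ℕ} (hK : 1 ≤ K) : AllCompBig K ((xhat K) ^ K) := by
  intro p hp hdvd
  have hx0 : xhat K ≠ 0 := by have := xhat_ge_two K; omega
  have hpx : p ∣ xhat K := hp.dvd_of_dvd_pow hdvd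
  have hv : 1 ≤ (xhat K).factorization p := hp.factorization_pos_of_dvd hx0 hpx
  have hfac : ((xhat K) ^ K).factorization p = K * (xhat K).factorization p := by
    rw [Nat.factorization_pow]; simp
  rw [hfac]
  calc K ≤ 2 ^ K := (Nat.lt_two_pow_self (n := K)).le
  _ ≤ p ^ K := Nat.pow_le_pow_left hp.two_le K
  _ ≤ p ^ (K * (xhat K).factorization p) :=
      Nat.pow_le_pow_right hp.pos (by nlinarith)

lemma xhat_sub_one_dvd (K : ℕ) : xhat K - 1 ∣ (xhat K) ^ K - 1 := by
  have := Nat.sub_dvd_pow_sub_pow (xhat K) 1 K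
  simpa using this

lemma allCompBig_xhat_pow_sub_one {K : ℕ} (hK : 1 ≤ K) :
    AllCompBig K ((xhat K) ^ K - 1) := by
  intro p hp hdvd
  set y := (xhat K) ^ K with hy
  have hy2 : 2 ^ K ≤ y := Nat.pow_le_pow_left (xhat_ge_two K) K
  have hyK : K < y := lt_of_lt_of_le (Nat.lt_two_pow_self (n := K)) hy2
  have hy0 : y - 1 ≠ 0 := by omega
  have hyeven : 2 ∣ y := Dvd.dvd.trans (xhat_even K) (dvd_pow_self _ (by omega))
  have hpodd : p ≠ 2 := by
    rintro rfl
    have h2 : (2:ℕ) ∣ y - (y - 1) := Nat.dvd_sub hyeven hdvd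
    rw [Nat.sub_sub_self (by omega)] at h2
    omega
  by_cases hpK : p ≤ K
  · have hc : p ^ (Nat.log p K + 1) ∣ y - 1 := by
      refine Dvd.dvd.trans ?_ (xhat_sub_one_dvd K)
      have : xhat K - 1 = Qprod K := by unfold xhat; omega
      rw [this]
      exact dvd_Qprod hp (by rcases hp.two_le.lt_or_eq with h | h; omega; omega) hpK
    have hle : Nat.log p K + 1 ≤ (y-1).factorization p :=
      (hp.pow_dvd_iff_le_factorization hy0).mp hc
    calc K ≤ p ^ (Nat.log p K + 1) := (Nat.lt_pow_succ_log_self hp.one_lt K).le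
    _ ≤ p ^ ((y-1).factorization p) := Nat.pow_le_pow_right hp.pos hle
  · have hv : 1 ≤ (y-1).factorization p := hp.factorization_pos_of_dvd hy0 hdvd
    calc K ≤ p := by omega
    _ = p ^ 1 := (pow_one p).symm
    _ ≤ p ^ ((y-1).factorization p) := Nat.pow_le_pow_right hp.pos hv

lemma allCompBig_xhat_pow_add_one {K : ℕ} (hK : 1 ≤ K) :
    AllCompBig K ((xhat K) ^ K + 1) := by
  intro p hp hdvd
  set y := (xhat K) ^ K with hy
  have hy0 : y + 1 ≠ 0 := by omega
  have hy2 : 2 ^ K ≤ y := Nat.pow_le_pow_left (xhat_ge_two K) K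
  have hyeven : 2 ∣ y := Dvd.dvd.trans (xhat_even K) (dvd_pow_self _ (by omega))
  have hpodd : p ≠ 2 := by
    rintro rfl
    omega
  have hpK : ¬ p ≤ K := by
    intro hpK
    have hodd : 2 < p := by rcases hp.two_le.lt_or_eq with h | h; omega; omega
    have hpQ : p ∣ Qprod K := by
      refine Dvd.dvd.trans (dvd_pow_self p (n := Nat.log p K + 1) (Nat.succ_ne_zero _)) ?_
      exact dvd_Qprod hp hodd hpK
    have hpy1 : p ∣ y - 1 := by
      refine Dvd.dvd.trans ?_ (xhat_sub_one_dvd K)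
      have : xhat K - 1 = Qprod K := by unfold xhat; omega
      rw [this]; exact hpQ
    have hy1 : 1 ≤ y := by
      have := Nat.one_le_two_pow (n := K); omega
    have : p ∣ 2 := by
      have h2 : p ∣ (y+1) - (y-1) := Nat.dvd_sub hdvd hpy1
      have h3 : (y+1) - (y-1) = 2 := by omega
      rwa [h3] at h2
    have := (Nat.le_of_dvd (by omega) this)
    omega
  have hv : 1 ≤ (y+1).factorization p := hp.factorization_pos_of_dvd hy0 hdvd
  calc K ≤ p := by omega
  _ = p ^ 1 := (pow_one p).symm
  _ ≤ p ^ ((y+1).factorization p) := Nat.pow_le_pow_right hp.pos hv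
end Triple

section CRT

lemma crt_fold (s : Finset ℕ) (hco : ∀ m ∈ s, ∀ m' ∈ s, m ≠ m' → Nat.Coprime m m')
    (r : ℕ → ℕ) : ∃ v : ℕ, ∀ m ∈ s, v % m = r m % m := by
  classical
  induction s using Finset.induction_on with
  | empty => exact ⟨0, by simp⟩
  | @insert p s hps ih =>
    obtain ⟨v, hv⟩ := ih (fun m hm m' hm' => hco m (Finset.mem_insert_of_mem hm) m'
      (Finset.mem_insert_of_mem hm'))
    have hcop : Nat.Coprime p (∏ m ∈ s, m) := by
      apply Nat.Coprime.prod_right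
      intro m hm
      exact hco p (Finset.mem_insert_self p s) m (Finset.mem_insert_of_mem hm)
        (fun h => hps (h ▸ hm))
    set w := (Nat.chineseRemainder hcop (r p) v).1 with hwdef
    obtain ⟨hw1, hw2⟩ := (Nat.chineseRemainder hcop (r p) v).2
    refine ⟨w, ?_⟩
    intro m hm
    rcases Finset.mem_insert.mp hm with rfl | hm
    · exact hw1
    · have hdvd : m ∣ ∏ m ∈ s, m := Finset.dvd_prod_of_mem _ hm
      have h2 : w ≡ v [MOD m] := Nat.ModEq.of_dvd hdvd hw2
      unfold Nat.ModEq at h2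
      rw [h2]
      exact hv m hm

end CRT

section PairDecomp

/-- odd primes up to k -/
def oddP (k : ℕ) : Finset ℕ := (Finset.range (k+1)).filter (fun p => p.Prime ∧ 2 < p)

def a2 (k : ℕ) : ℕ := Nat.log 2 k + 1

def Modd (k : ℕ) : ℕ := ∏ p ∈ insert 2 (oddP k), p

def Ubound (k : ℕ) : ℕ := 2 ^ (a2 k) * (2 * Modd k)

lemma k_lt_two_pow_a2 (k : ℕ) : k < 2 ^ (a2 k) := Nat.lt_pow_succ_log_self (by omega) k

lemma Modd_pos (k : ℕ) : 1 ≤ Modd k := by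
  apply Finset.one_le_prod'
  intro p hp
  rcases Finset.mem_insert.mp hp with rfl | hp
  · omega
  · simp only [oddP, Finset.mem_filter] at hp
    omega

lemma oddP_coprime (k : ℕ) : ∀ m ∈ insert 2 (oddP k), ∀ m' ∈ insert 2 (oddP k),
    m ≠ m' → Nat.Coprime m m' := by
  intro m hm m' hm' hne
  have hp : ∀ x ∈ insert 2 (oddP k), Nat.Prime x := by
    intro x hx
    rcases Finset.mem_insert.mp hx with rfl | hx
    · exact Nat.prime_two
    · simp only [oddP, Finset.mem_filter] at hx
      exact hx.2.1
  exact (Nat.coprime_primes (hp m hm) (hp m' hm')).mpr hne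

/-- Normalized CRT solution in `[M, 2M)`. -/
lemma crt_solution (k : ℕ) (r : ℕ → ℕ) :
    ∃ v : ℕ, Modd k ≤ v ∧ v < 2 * Modd k ∧
      ∀ m ∈ insert 2 (oddP k), v % m = r m % m := by
  obtain ⟨v₀, hv₀⟩ := crt_fold (insert 2 (oddP k)) (oddP_coprime k) r
  set M := Modd k with hM
  have hMpos : 1 ≤ M := Modd_pos k
  refine ⟨v₀ % M + M, by omega, by have := Nat.mod_lt v₀ (show 0 < M by omega); omega, ?_⟩
  intro m hm
  have hd : m ∣ M := Finset.dvd_prod_of_mem _ hm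
  obtain ⟨c, hc⟩ := hd
  rw [hc, Nat.add_mul_mod_self_left, Nat.mod_mod_of_dvd v₀ ⟨c, hc⟩] at *
  exact hv₀ m hm

lemma mem_oddP {k p : ℕ} (hp : p.Prime) (hp2 : p ≠ 2) (hpk : p ≤ k) : p ∈ insert 2 (oddP k) := by
  apply Finset.mem_insert_of_mem
  simp only [oddP, Finset.mem_filter, Finset.mem_range]
  have := hp.two_le
  exact ⟨by omega, hp, by omega⟩

/-- Decompose any large `x` as a sum of two numbers whose prime-power components
all exceed `k`. -/
lemma exists_pair_decomp (k x : ℕ) (hx : Ubound k + 2 ≤ x) :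
    ∃ u₁ u₂ : ℕ, u₁ + u₂ = x ∧ 1 ≤ u₁ ∧ 1 ≤ u₂ ∧ u₁ ≤ Ubound k ∧
      AllCompBig k u₁ ∧ AllCompBig k u₂ := by
  classical
  set A := a2 k with hA
  have hA1 : 1 ≤ A := by rw [hA]; unfold a2; omega
  have h2A : 2 ∣ 2 ^ A := dvd_pow_self 2 (by omega)
  have hk2A : k < 2 ^ A := k_lt_two_pow_a2 k
  have hMpos := Modd_pos k
  by_cases hpar : x % 2 = 1
  case pos =>
    set r : ℕ → ℕ := fun p => if (2 ^ A * 1) % p = x % p then 2 else 1 with hr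
    obtain ⟨v, hvlb, hvub, hvres⟩ := crt_solution k r
    have hvodd : v % 2 = 1 := by
      have h := hvres 2 (Finset.mem_insert_self _ _)
      have hr2 : r 2 = 1 := by
        simp only [hr]
        rw [if_neg (by omega)]
      rw [hr2] at h; omega
    have hv1 : 1 ≤ v := by omega
    set u₁ := 2 ^ A * v with hu₁
    have hu₁Ub : u₁ ≤ Ubound k := by
      rw [hu₁]; unfold Ubound
      have : v ≤ 2 * Modd k := by omega
      exact Nat.mul_le_mul_left _ this
    have hu₁pos : 1 ≤ u₁ := by
      rw [hu₁]
      have : 0 < 2 ^ A * v := by positivity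
      omega
    have hu₁x : u₁ + 2 ≤ x := by omega
    refine ⟨u₁, x - u₁, by omega, hu₁pos, by omega, hu₁Ub, ?_, ?_⟩
    · -- AllCompBig k u₁
      intro p hp hdvd
      by_cases hp2 : p = 2
      · subst hp2
        have hfac : u₁.factorization 2 = A := by
          have h1 : (2 ^ A).factorization 2 = A := by
            rw [Nat.factorization_pow, Finsupp.smul_apply,
              Nat.Prime.factorization_self Nat.prime_two]
            simp
          have h2 : v.factorization 2 = 0 :=
            Nat.factorization_eq_zero_of_not_dvd (by omega)
          rw [hu₁, Nat.factorization_mul (by positivity) (by omega),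
            Finsupp.add_apply, h1, h2]
          omega
        rw [hfac]; omega
      · by_cases hpk : p ≤ k
        · exfalso
          rcases (Nat.Prime.dvd_mul hp).mp (hu₁ ▸ hdvd) with hd | hd
          · exact hp2 ((Nat.prime_dvd_prime_iff_eq hp Nat.prime_two).mp
              (hp.dvd_of_dvd_pow hd))
          · have hres := hvres p (mem_oddP hp hp2 hpk)
            have hrp : r p % p ≠ 0 := by
              have hp3 : 3 ≤ p := by have := hp.two_le; omega
              simp only [hr]; split <;>
                rw [Nat.mod_eq_of_lt (by omega)] <;> omega
            have : v % p = 0 := Nat.mod_eq_zero_of_dvd hd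
            rw [this] at hres; exact hrp hres.symm
        · have hv : 1 ≤ u₁.factorization p :=
            hp.factorization_pos_of_dvd (by omega) hdvd
          calc k ≤ p := by omega
          _ = p ^ 1 := (pow_one p).symm
          _ ≤ p ^ (u₁.factorization p) := Nat.pow_le_pow_right hp.pos hv
    · -- AllCompBig k (x - u₁)
      intro p hp hdvd
      have hu₁even : u₁ % 2 = 0 := by
        rw [hu₁]; obtain ⟨c, hc⟩ := h2A
        rw [hc, Nat.mul_assoc, Nat.mul_mod_right]
      by_cases hp2 : p = 2
      · exfalso; subst hp2
        have : (x - u₁) % 2 = 1 := by omega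
        omega
      · by_cases hpk : p ≤ k
        · exfalso
          have hres := hvres p (mem_oddP hp hp2 hpk)
          have hcong : u₁ % p = x % p := by
            have h1 : u₁ ≡ x [MOD p] := (Nat.modEq_iff_dvd' (by omega)).mpr hdvd
            exact h1
          have hu₁mod : u₁ % p = (2 ^ A * r p) % p := by
            rw [hu₁, Nat.mul_mod, hres]
            exact (Nat.mul_mod _ _ _).symm
          -- now the choice of r p gives a contradiction
          rw [hr] at hu₁mod
          by_cases hcond : (2 ^ A * 1) % p = x % p
          · simp only [hcond, if_pos] at hu₁mod
            have : (2 ^ A * 2) % p = x % p := by rw [← hu₁mod, ← hcong]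
            have hdv : p ∣ 2 ^ A * 2 - 2 ^ A * 1 := by
              have e1 : 2 ^ A * 1 ≡ x [MOD p] := hcond
              have e2 : 2 ^ A * 2 ≡ x [MOD p] := this
              exact (Nat.modEq_iff_dvd' (by nlinarith)).mp (e1.trans e2.symm)
            have : p ∣ 2 ^ A := by
              have : 2 ^ A * 2 - 2 ^ A * 1 = 2 ^ A := by ring_nf; omega
              rwa [this] at hdv
            exact hp2 ((Nat.prime_dvd_prime_iff_eq hp Nat.prime_two).mp
              (hp.dvd_of_dvd_pow this))
          · simp only [hcond, if_neg, if_false] at hu₁mod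
            rw [hu₁mod] at hcong
            exact hcond hcong
        · have hv : 1 ≤ (x - u₁).factorization p :=
            hp.factorization_pos_of_dvd (by omega) hdvd
          calc k ≤ p := by omega
          _ = p ^ 1 := (pow_one p).symm
          _ ≤ p ^ ((x - u₁).factorization p) := Nat.pow_le_pow_right hp.pos hv
  case neg =>
    set r : ℕ → ℕ := fun p => if 1 % p = x % p then 2 else 1 with hr
    obtain ⟨v, hvlb, hvub, hvres⟩ := crt_solution k r
    have hvodd : v % 2 = 1 := by
      have h := hvres 2 (Finset.mem_insert_self _ _)
      have hr2 : r 2 = 1 := by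
        simp only [hr]
        rw [if_neg (by omega)]
      rw [hr2] at h; omega
    have hv1 : 1 ≤ v := by omega
    have hvUb : v ≤ Ubound k := by
      have h1 : v ≤ 2 * Modd k := by omega
      calc v ≤ 2 * Modd k := h1
      _ = 1 * (2 * Modd k) := (one_mul _).symm
      _ ≤ 2 ^ (a2 k) * (2 * Modd k) := Nat.mul_le_mul_right _ Nat.one_le_two_pow
      _ = Ubound k := rfl
    refine ⟨v, x - v, by omega, hv1, by omega, hvUb, ?_, ?_⟩
    · intro p hp hdvd
      by_cases hp2 : p = 2
      · exfalso; subst hp2; omega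
      · by_cases hpk : p ≤ k
        · exfalso
          have hres := hvres p (mem_oddP hp hp2 hpk)
          have hrp : r p % p ≠ 0 := by
            have hp3 : 3 ≤ p := by have := hp.two_le; omega
            simp only [hr]; split <;>
              rw [Nat.mod_eq_of_lt (by omega)] <;> omega
          have : v % p = 0 := Nat.mod_eq_zero_of_dvd hdvd
          rw [this] at hres; exact hrp hres.symm
        · have hv : 1 ≤ v.factorization p :=
            hp.factorization_pos_of_dvd (by omega) hdvd
          calc k ≤ p := by omega
          _ = p ^ 1 := (pow_one p).symm
          _ ≤ p ^ (v.factorization p) := Nat.pow_le_pow_right hp.pos hv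
    · intro p hp hdvd
      by_cases hp2 : p = 2
      · exfalso; subst hp2
        have : (x - v) % 2 = 1 := by omega
        omega
      · by_cases hpk : p ≤ k
        · exfalso
          have hres := hvres p (mem_oddP hp hp2 hpk)
          have hp3 : 3 ≤ p := by have := hp.two_le; omega
          have hcong : v % p = x % p := by
            have h1 : v ≡ x [MOD p] := (Nat.modEq_iff_dvd' (by omega)).mpr hdvd
            exact h1
          rw [hres] at hcong
          simp only [hr] at hcong
          by_cases hcond : 1 % p = x % p
          · rw [if_pos hcond] at hcong
            have h2 : (1:ℕ) % p = 1 := Nat.mod_eq_of_lt (by omega)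
            have h3 : (2:ℕ) % p = 2 := Nat.mod_eq_of_lt (by omega)
            omega
          · rw [if_neg hcond] at hcong
            exact hcond hcong
        · have hv : 1 ≤ (x - v).factorization p :=
            hp.factorization_pos_of_dvd (by omega) hdvd
          calc k ≤ p := by omega
          _ = p ^ 1 := (pow_one p).symm
          _ ≤ p ^ ((x - v).factorization p) := Nat.pow_le_pow_right hp.pos hv

end PairDecomp

section ITD

lemma exists_perm_comp {ρ τ : Type} [Fintype ρ] [Fintype τ] [DecidableEq ρ] [DecidableEq τ]
    (f g : ρ → τ) (hf : Function.Injective f) (hg : Function.Injective g) :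
    ∃ π : Equiv.Perm τ, ∀ j, π (f j) = g j := by
  classical
  have c1 : Fintype.card (Set.range f) = Fintype.card ρ := Set.card_range_of_injective hf
  have c2 : Fintype.card (Set.range g) = Fintype.card ρ := Set.card_range_of_injective hg
  have cc : Fintype.card ((Set.range f)ᶜ : Set τ) = Fintype.card ((Set.range g)ᶜ : Set τ) := by
    rw [Fintype.card_compl_set, Fintype.card_compl_set, c1, c2]
  have ec : ((Set.range f)ᶜ : Set τ) ≃ ((Set.range g)ᶜ : Set τ) := Fintype.equivOfCardEq cc
  refine ⟨((Equiv.Set.sumCompl (Set.range f)).symm.trans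
    (((Equiv.ofInjective f hf).symm.sumCongr (Equiv.refl _)).trans
    (((Equiv.ofInjective g hg).sumCongr ec).trans (Equiv.Set.sumCompl (Set.range g))))), ?_⟩
  intro j
  rw [Equiv.trans_apply, Equiv.Set.sumCompl_symm_apply_of_mem (Set.mem_range_self j)]
  simp only [Equiv.trans_apply, Equiv.sumCongr_apply, Sum.map_inl,
    Equiv.ofInjective_symm_apply hf j]
  rw [Equiv.Set.sumCompl_apply_inl]
  simp [Equiv.ofInjective_apply]

lemma exists_ITD (k A : ℕ) (hA : 1 ≤ A) (ρ : Type) [Fintype ρ]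
    (h : TDex (k+1) (A + Fintype.card ρ)) :
    ∃ (ι : Type) (G : ι → Fin k → (Fin A ⊕ ρ)),
      (∀ i i' : Fin k, i ≠ i' → ∀ a b : Fin A ⊕ ρ,
        (∀ j : ρ, ¬(a = Sum.inr j ∧ b = Sum.inr j)) → ∃! g, G g i = a ∧ G g i' = b) ∧
      (∀ i i' : Fin k, i ≠ i' → ∀ (j : ρ) (g : ι),
        ¬(G g i = Sum.inr j ∧ G g i' = Sum.inr j)) := by
  classical
  rcases Nat.eq_zero_or_pos k with rfl | hk
  · exact ⟨PUnit, fun _ => Fin.elim0, fun i => i.elim0, fun i => i.elim0⟩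
  set τ := (Fin A ⊕ ρ) with hτ
  have hcardτ : Fintype.card τ = A + Fintype.card ρ := by simp [hτ]
  obtain ⟨ι, F, hF⟩ := h.toCarrier τ hcardτ
  set lst : Fin (k+1) := Fin.last k with hlst
  have hcs_ne : ∀ i : Fin k, (i.castSucc : Fin (k+1)) ≠ lst := by
    intro i hc
    have := congrArg Fin.val hc
    rw [Fin.coe_castSucc, Fin.val_last] at this
    exact absurd this (Nat.ne_of_lt i.isLt)
  have hcs_inj : Function.Injective (Fin.castSucc : Fin k → Fin (k+1)) :=
    Fin.castSucc_injective k
  set z₀ : τ := Sum.inl ⟨0, hA⟩ with hz₀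
  have h0ne : (0 : Fin (k+1)) ≠ lst := by
    intro hc
    have := congrArg Fin.val hc
    rw [Fin.val_zero, Fin.val_last] at this
    omega
  -- the s pairwise disjoint blocks through z₀
  have hD : ∀ j : ρ, ∃! t : ι, F t 0 = Sum.inr j ∧ F t lst = z₀ :=
    fun j => hF 0 lst h0ne (Sum.inr j) z₀
  set D : ρ → ι := fun j => (hD j).choose with hDdef
  have hDs : ∀ j : ρ, F (D j) 0 = Sum.inr j ∧ F (D j) lst = z₀ := fun j => (hD j).choose_spec.1
  have hDdisj : ∀ (j j' : ρ) (c : Fin (k+1)), c ≠ lst → F (D j) c = F (D j') c → j = j' := by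
    intro j j' c hc heq
    have hu := hF c lst hc (F (D j) c) z₀
    have e1 : D j = D j' := by
      have := hu.unique ⟨rfl, (hDs j).2⟩ ⟨heq.symm, (hDs j').2⟩
      exact this
    have := (hDs j).1
    rw [e1, (hDs j').1] at this
    exact (Sum.inr_injective this).symm
  -- per-coordinate relabelling permutations
  have hπ : ∀ i : Fin k, ∃ π : Equiv.Perm τ, ∀ j : ρ, π (F (D j) i.castSucc) = Sum.inr j := by
    intro i
    apply exists_perm_comp _ _ ?_ Sum.inr_injective
    intro j j' he
    exact hDdisj j j' i.castSucc (hcs_ne i) he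
  choose π hπs using hπ
  refine ⟨{tt : ι // ∀ j : ρ, tt ≠ D j}, fun tt i => π i (F tt.1 i.castSucc), ?_, ?_⟩
  · intro i i' hii a b hnothole
    have hne : (i.castSucc : Fin (k+1)) ≠ i'.castSucc := fun hc => hii (hcs_inj hc)
    obtain ⟨tt, ⟨ht1, ht2⟩, htu⟩ := hF i.castSucc i'.castSucc hne ((π i).symm a) ((π i').symm b)
    have htD : ∀ j : ρ, tt ≠ D j := by
      intro j hc
      apply hnothole j
      have ha : a = Sum.inr j := by
        calc a = π i ((π i).symm a) := (Equiv.apply_symm_apply _ _).symm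
        _ = π i (F tt i.castSucc) := by rw [ht1]
        _ = π i (F (D j) i.castSucc) := by rw [hc]
        _ = Sum.inr j := hπs i j
      have hb : b = Sum.inr j := by
        calc b = π i' ((π i').symm b) := (Equiv.apply_symm_apply _ _).symm
        _ = π i' (F tt i'.castSucc) := by rw [ht2]
        _ = π i' (F (D j) i'.castSucc) := by rw [hc]
        _ = Sum.inr j := hπs i' j
      exact ⟨ha, hb⟩
    refine ⟨⟨tt, htD⟩, ⟨?_, ?_⟩, ?_⟩
    · show π i (F tt i.castSucc) = a
      rw [ht1, Equiv.apply_symm_apply]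
    · show π i' (F tt i'.castSucc) = b
      rw [ht2, Equiv.apply_symm_apply]
    · rintro ⟨tt', htt'⟩ ⟨hh1, hh2⟩
      have hh1' : π i (F tt' i.castSucc) = a := hh1
      have hh2' : π i' (F tt' i'.castSucc) = b := hh2
      apply Subtype.ext
      apply htu
      constructor
      · rw [← hh1', Equiv.symm_apply_apply]
      · rw [← hh2', Equiv.symm_apply_apply]
  · intro i i' hii j g hc
    obtain ⟨h1x, h2x⟩ := hc
    have h1 : π i (F g.1 i.castSucc) = Sum.inr j := h1x
    have h2 : π i' (F g.1 i'.castSucc) = Sum.inr j := h2x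
    have e1 : F g.1 i.castSucc = F (D j) i.castSucc := by
      have := hπs i j
      have h1' : π i (F g.1 i.castSucc) = π i (F (D j) i.castSucc) := by rw [h1, this]
      exact (π i).injective h1'
    have e2 : F g.1 i'.castSucc = F (D j) i'.castSucc := by
      have := hπs i' j
      have h2' : π i' (F g.1 i'.castSucc) = π i' (F (D j) i'.castSucc) := by rw [h2, this]
      exact (π i').injective h2'
    have hne : (i.castSucc : Fin (k+1)) ≠ i'.castSucc := fun hcc => hii (hcs_inj hcc)
    have hu := hF i.castSucc i'.castSucc hne (F (D j) i.castSucc) (F (D j) i'.castSucc)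
    have : g.1 = D j := hu.unique ⟨e1, e2⟩ ⟨rfl, rfl⟩
    exact g.2 j this

end ITD

section Master

lemma exuniq_swap {ι : Sort*} {p q : ι → Prop} (h : ∃! t, p t ∧ q t) : ∃! t, q t ∧ p t := by
  obtain ⟨t, ⟨h1, h2⟩, hu⟩ := h
  exact ⟨t, ⟨h2, h1⟩, fun t' ⟨h1', h2'⟩ => hu t' ⟨h2', h1'⟩⟩

set_option maxHeartbeats 2000000 in
theorem master_td (k A t u₂ u₃ : ℕ) (hA : 1 ≤ A)
    (hu₂ : 1 ≤ u₂) (hu₂t : u₂ ≤ t) (hu₃ : 1 ≤ u₃) (hu₃t : u₃ ≤ t)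
    (hM : TDex (k+4) t)
    (hI2 : TDex (k+1) (A+2)) (hI3 : TDex (k+1) (A+3)) (hI4 : TDex (k+1) (A+4))
    (ft : TDex k t) (f2 : TDex k u₂) (f3 : TDex k u₃) :
    TDex k (A * t + t + t + u₂ + u₃) := by
  classical
  set u : Fin 4 → ℕ := ![t, t, u₂, u₃] with hu
  have hut : ∀ j : Fin 4, u j ≤ t := by
    intro j
    fin_cases j <;> simp [hu, hu₂t, hu₃t]
  set κ : ∀ j : Fin 4, Fin (u j) ↪ Fin t := fun j => Fin.castLEEmb (hut j) with hκ
  have hκval : ∀ (j : Fin 4) (r : Fin (u j)), (κ j r : Fin t).val = r.val := by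
    intro j r; simp [hκ]
  obtain ⟨ιM, M, hMtd⟩ := hM.toCarrier (Fin t) (by simp)
  set β : ιM → Fin k → Fin t := fun m i => M m (Fin.castAdd 4 i) with hβ
  set γ : ιM → Fin 4 → Fin t := fun m j => M m (Fin.natAdd k j) with hγ
  have hmix : ∀ (i : Fin k) (j : Fin 4), Fin.castAdd 4 i ≠ Fin.natAdd k j := by
    intro i j hc
    have h1 := congrArg Fin.val hc
    rw [Fin.coe_castAdd, Fin.coe_natAdd] at h1
    have := i.isLt
    omega
  have hcastinj : ∀ (i i' : Fin k), i ≠ i' → Fin.castAdd 4 i ≠ Fin.castAdd 4 i' := by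
    intro i i' hii hc
    apply hii
    have h1 := congrArg Fin.val hc
    rw [Fin.coe_castAdd, Fin.coe_castAdd] at h1
    exact Fin.ext h1
  have hnatinj : ∀ (j j' : Fin 4), j ≠ j' → Fin.natAdd k j ≠ Fin.natAdd k j' := by
    intro j j' hjj hc
    apply hjj
    have h1 := congrArg Fin.val hc
    rw [Fin.coe_natAdd, Fin.coe_natAdd] at h1
    exact Fin.ext (by omega)
  set Hit : ιM → Finset (Fin 4) := fun m =>
    Finset.univ.filter (fun j => ∃ r : Fin (u j), κ j r = γ m j) with hHit
  have hmemHit : ∀ m j, j ∈ Hit m ↔ ∃ r : Fin (u j), κ j r = γ m j := by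
    intro m j
    simp [hHit]
  have hit0 : ∀ m, (0 : Fin 4) ∈ Hit m := by
    intro m
    rw [hmemHit]
    have h0 : u 0 = t := by simp [hu]
    refine ⟨⟨(γ m 0).val, by rw [h0]; exact (γ m 0).isLt⟩, ?_⟩
    apply Fin.ext
    rw [hκval]
  have hit1 : ∀ m, (1 : Fin 4) ∈ Hit m := by
    intro m
    rw [hmemHit]
    have h0 : u 1 = t := by simp [hu]
    refine ⟨⟨(γ m 1).val, by rw [h0]; exact (γ m 1).isLt⟩, ?_⟩
    apply Fin.ext
    rw [hκval]
  have hs2 : ∀ m, 2 ≤ (Hit m).card := by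
    intro m
    have : ({0, 1} : Finset (Fin 4)) ⊆ Hit m := by
      intro j hj
      rcases Finset.mem_insert.mp hj with rfl | hj
      · exact hit0 m
      · rw [Finset.mem_singleton.mp hj]; exact hit1 m
    calc 2 = ({0, 1} : Finset (Fin 4)).card := by decide
    _ ≤ (Hit m).card := Finset.card_le_card this
  have hs4 : ∀ m, (Hit m).card ≤ 4 := by
    intro m
    have h := Finset.card_le_univ (Hit m)
    simpa using h
  have hing : ∀ m, TDex (k+1) (A + (Hit m).card) := by
    intro m
    have h2 := hs2 m
    have h4 := hs4 m
    interval_cases h : (Hit m).card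
    · exact hI2
    · exact hI3
    · exact hI4
  have hitd : ∀ m : ιM, ∃ (ι : Type) (G : ι → Fin k → (Fin A ⊕ {j : Fin 4 // j ∈ Hit m})),
      (∀ i i' : Fin k, i ≠ i' → ∀ a b : Fin A ⊕ {j : Fin 4 // j ∈ Hit m},
        (∀ j, ¬(a = Sum.inr j ∧ b = Sum.inr j)) → ∃! g, G g i = a ∧ G g i' = b) ∧
      (∀ i i' : Fin k, i ≠ i' → ∀ j (g : ι),
        ¬(G g i = Sum.inr j ∧ G g i' = Sum.inr j)) := by
    intro m
    exact exists_ITD k A hA _ (by rw [Fintype.card_coe]; exact hing m)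
  choose ιI GI hP using hitd
  have hP1 := fun m => (hP m).1
  have hP2 := fun m => (hP m).2
  -- the column of a hit extra group
  have hcolex : ∀ m (j : Fin 4), j ∈ Hit m → ∃ r : Fin (u j), κ j r = γ m j := by
    intro m j hj
    exact (hmemHit m j).mp hj
  set col : ∀ (m : ιM) (j : Fin 4), j ∈ Hit m → Fin (u j) :=
    fun m j hj => (hcolex m j hj).choose with hcol
  have hcolspec : ∀ m j hj, κ j (col m j hj) = γ m j := fun m j hj => (hcolex m j hj).choose_spec
  have hcoluniq : ∀ m j hj (cl : Fin (u j)), κ j cl = γ m j → col m j hj = cl := by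
    intro m j hj cl hcl
    apply (κ j).injective
    rw [hcolspec m j hj, hcl]
  -- fillings
  have hfillex : ∀ j : Fin 4, ∃ (ι : Type) (G : ι → Fin k → Fin (u j)), IsTD k G := by
    intro j
    have hTD : TDex k (u j) := by
      fin_cases j
      · simpa [hu] using ft
      · simpa [hu] using ft
      · simpa [hu] using f2
      · simpa [hu] using f3
    exact hTD.toCarrier (Fin (u j)) (by simp)
  choose ιf Gf hGf using hfillex
  -- final point set
  set Ω : Type := (Fin t × Fin A) ⊕ (Σ j : Fin 4, Fin (u j)) with hΩ
  have hcardΩ : Fintype.card Ω = A * t + t + t + u₂ + u₃ := by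
    simp only [hΩ, Fintype.card_sum, Fintype.card_prod, Fintype.card_fin, Fintype.card_sigma]
    rw [Fin.sum_univ_four]
    simp [hu]
    ring
  -- blocks
  set ι : Type := (Σ m : ιM, ιI m) ⊕ (Σ j : Fin 4, ιf j) with hι
  set C : ι → Fin k → Ω := fun x i =>
    Sum.elim
      (fun mg => Sum.elim
        (fun a => Sum.inl (β mg.1 i, a))
        (fun jj => Sum.inr ⟨jj.1, col mg.1 jj.1 jj.2⟩)
        (GI mg.1 mg.2 i))
      (fun jh => Sum.inr ⟨jh.1, Gf jh.1 jh.2 i⟩) x with hC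
  -- computation lemmas for C
  have hCmain : ∀ (m : ιM) (g : ιI m) (i : Fin k) (a : Fin A),
      GI m g i = Sum.inl a → C (Sum.inl ⟨m, g⟩) i = Sum.inl (β m i, a) := by
    intro m g i a hgi
    simp [hC, hgi]
  have hCinf : ∀ (m : ιM) (g : ιI m) (i : Fin k) (jj : {j : Fin 4 // j ∈ Hit m}),
      GI m g i = Sum.inr jj → C (Sum.inl ⟨m, g⟩) i = Sum.inr ⟨jj.1, col m jj.1 jj.2⟩ := by
    intro m g i jj hgi
    simp [hC, hgi]
  have hCfill : ∀ (j : Fin 4) (h : ιf j) (i : Fin k),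
      C (Sum.inr ⟨j, h⟩) i = Sum.inr ⟨j, Gf j h i⟩ := by
    intro j h i
    simp [hC]
  -- the four coverage cases
  have caseMM : ∀ (i i' : Fin k), i ≠ i' → ∀ (y y' : Fin t) (a a' : Fin A),
      ∃! w : ι, C w i = Sum.inl (y, a) ∧ C w i' = Sum.inl (y', a') := by
    intro i i' hii y y' a a'
    obtain ⟨mm, ⟨hm1, hm2⟩, hmu⟩ := hMtd (Fin.castAdd 4 i) (Fin.castAdd 4 i')
      (hcastinj i i' hii) y y'
    obtain ⟨g, ⟨hg1, hg2⟩, hgu⟩ := hP1 mm i i' hii (Sum.inl a) (Sum.inl a') (by simp)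
    refine ⟨Sum.inl ⟨mm, g⟩, ⟨?_, ?_⟩, ?_⟩
    · rw [hCmain mm g i a hg1]
      have hb : β mm i = y := hm1
      rw [hb]
    · rw [hCmain mm g i' a' hg2]
      have hb : β mm i' = y' := hm2
      rw [hb]
    · rintro (⟨m', g'⟩ | ⟨j₂, h₂⟩) ⟨hw1, hw2⟩
      · rcases hgi : GI m' g' i with a₂ | jj
        case inr => rw [hCinf m' g' i jj hgi] at hw1; exact absurd hw1 (by simp)
        rcases hgi' : GI m' g' i' with a₂' | jj'
        case inr => rw [hCinf m' g' i' jj' hgi'] at hw2; exact absurd hw2 (by simp)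
        rw [hCmain m' g' i a₂ hgi] at hw1
        rw [hCmain m' g' i' a₂' hgi'] at hw2
        have e1 : β m' i = y ∧ a₂ = a := by
          have h := Sum.inl_injective hw1
          exact ⟨congrArg Prod.fst h, congrArg Prod.snd h⟩
        have e2 : β m' i' = y' ∧ a₂' = a' := by
          have h := Sum.inl_injective hw2
          exact ⟨congrArg Prod.fst h, congrArg Prod.snd h⟩
        have hm' : m' = mm := hmu m' ⟨e1.1, e2.1⟩
        subst hm'
        have hg' : g' = g := hgu g' ⟨by rw [hgi, e1.2], by rw [hgi', e2.2]⟩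
        rw [hg']
      · rw [hCfill j₂ h₂ i] at hw1
        exact absurd hw1 (by simp)
  have caseMI : ∀ (i i' : Fin k), i ≠ i' → ∀ (y : Fin t) (a : Fin A) (j : Fin 4)
      (cl : Fin (u j)),
      ∃! w : ι, C w i = Sum.inl (y, a) ∧ C w i' = Sum.inr ⟨j, cl⟩ := by
    intro i i' hii y a j cl
    obtain ⟨mm, ⟨hm1, hm2⟩, hmu⟩ := hMtd (Fin.castAdd 4 i) (Fin.natAdd k j)
      (hmix i j) y (κ j cl)
    have hj : j ∈ Hit mm := (hmemHit mm j).mpr ⟨cl, hm2.symm⟩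
    have hcl : col mm j hj = cl := hcoluniq mm j hj cl hm2.symm
    obtain ⟨g, ⟨hg1, hg2⟩, hgu⟩ := hP1 mm i i' hii (Sum.inl a) (Sum.inr ⟨j, hj⟩) (by simp)
    refine ⟨Sum.inl ⟨mm, g⟩, ⟨?_, ?_⟩, ?_⟩
    · rw [hCmain mm g i a hg1]
      have hb : β mm i = y := hm1
      rw [hb]
    · rw [hCinf mm g i' ⟨j, hj⟩ hg2]
      rw [hcl]
    · rintro (⟨m', g'⟩ | ⟨j₂, h₂⟩) ⟨hw1, hw2⟩
      · rcases hgi : GI m' g' i with a₂ | jj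
        case inr => rw [hCinf m' g' i jj hgi] at hw1; exact absurd hw1 (by simp)
        rcases hgi' : GI m' g' i' with a₂' | jj'
        case inl => rw [hCmain m' g' i' a₂' hgi'] at hw2; exact absurd hw2 (by simp)
        rw [hCmain m' g' i a₂ hgi] at hw1
        rw [hCinf m' g' i' jj' hgi'] at hw2
        have e1 : β m' i = y ∧ a₂ = a := by
          have h := Sum.inl_injective hw1
          exact ⟨congrArg Prod.fst h, congrArg Prod.snd h⟩
        obtain ⟨j₁, hj₁mem⟩ := jj'
        have hsg := Sum.inr_injective hw2
        obtain ⟨hj1, hv⟩ := Sigma.mk.inj_iff.mp hsg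
        subst hj1
        have hveq : col m' j₁ hj₁mem = cl := eq_of_heq hv
        have hγ' : γ m' j₁ = κ j₁ cl := by
          rw [← hveq]
          exact (hcolspec m' j₁ hj₁mem).symm
        have hm' : m' = mm := hmu m' ⟨e1.1, hγ'⟩
        subst hm'
        have hjj : (⟨j₁, hj₁mem⟩ : {j : Fin 4 // j ∈ Hit m'}) = ⟨j₁, hj⟩ :=
          Subtype.ext rfl
        have hg' : g' = g := hgu g' ⟨by rw [hgi, e1.2], by rw [hgi', hjj]⟩
        rw [hg']
      · rw [hCfill j₂ h₂ i] at hw1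
        exact absurd hw1 (by simp)
  have caseIID : ∀ (i i' : Fin k), i ≠ i' → ∀ (j : Fin 4) (cl : Fin (u j)) (j' : Fin 4)
      (cl' : Fin (u j')), j ≠ j' →
      ∃! w : ι, C w i = Sum.inr ⟨j, cl⟩ ∧ C w i' = Sum.inr ⟨j', cl'⟩ := by
    intro i i' hii j cl j' cl' hjj
    obtain ⟨mm, ⟨hm1, hm2⟩, hmu⟩ := hMtd (Fin.natAdd k j) (Fin.natAdd k j')
      (hnatinj j j' hjj) (κ j cl) (κ j' cl')
    have hjm : j ∈ Hit mm := (hmemHit mm j).mpr ⟨cl, hm1.symm⟩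
    have hj'm : j' ∈ Hit mm := (hmemHit mm j').mpr ⟨cl', hm2.symm⟩
    have hcl : col mm j hjm = cl := hcoluniq mm j hjm cl hm1.symm
    have hcl' : col mm j' hj'm = cl' := hcoluniq mm j' hj'm cl' hm2.symm
    have hnothole : ∀ jρ : {jj : Fin 4 // jj ∈ Hit mm},
        ¬((Sum.inr ⟨j, hjm⟩ : Fin A ⊕ {jj : Fin 4 // jj ∈ Hit mm}) = Sum.inr jρ ∧
          (Sum.inr ⟨j', hj'm⟩ : Fin A ⊕ {jj : Fin 4 // jj ∈ Hit mm}) = Sum.inr jρ) := by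
      rintro jρ ⟨hq1, hq2⟩
      apply hjj
      have e1 := Sum.inr_injective hq1
      have e2 := Sum.inr_injective hq2
      rw [← e2] at e1
      exact congrArg Subtype.val e1
    obtain ⟨g, ⟨hg1, hg2⟩, hgu⟩ := hP1 mm i i' hii (Sum.inr ⟨j, hjm⟩) (Sum.inr ⟨j', hj'm⟩)
      hnothole
    refine ⟨Sum.inl ⟨mm, g⟩, ⟨?_, ?_⟩, ?_⟩
    · rw [hCinf mm g i ⟨j, hjm⟩ hg1, hcl]
    · rw [hCinf mm g i' ⟨j', hj'm⟩ hg2, hcl']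
    · rintro (⟨m', g'⟩ | ⟨j₂, h₂⟩) ⟨hw1, hw2⟩
      · rcases hgi : GI m' g' i with a₂ | jj
        case inl => rw [hCmain m' g' i a₂ hgi] at hw1; exact absurd hw1 (by simp)
        rcases hgi' : GI m' g' i' with a₂' | jj'
        case inl => rw [hCmain m' g' i' a₂' hgi'] at hw2; exact absurd hw2 (by simp)
        rw [hCinf m' g' i jj hgi] at hw1
        rw [hCinf m' g' i' jj' hgi'] at hw2
        obtain ⟨j₁, hj₁mem⟩ := jj
        obtain ⟨j₁', hj₁mem'⟩ := jj'
        obtain ⟨e1, ev1⟩ := Sigma.mk.inj_iff.mp (Sum.inr_injective hw1)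
        obtain ⟨e2, ev2⟩ := Sigma.mk.inj_iff.mp (Sum.inr_injective hw2)
        subst e1; subst e2
        have hveq1 : col m' j₁ hj₁mem = cl := eq_of_heq ev1
        have hveq2 : col m' j₁' hj₁mem' = cl' := eq_of_heq ev2
        have hγ1 : γ m' j₁ = κ j₁ cl := by rw [← hveq1]; exact (hcolspec m' j₁ hj₁mem).symm
        have hγ2 : γ m' j₁' = κ j₁' cl' := by rw [← hveq2]; exact (hcolspec m' j₁' hj₁mem').symm
        have hm' : m' = mm := hmu m' ⟨hγ1, hγ2⟩
        subst hm'
        have hjj1 : (⟨j₁, hj₁mem⟩ : {jj : Fin 4 // jj ∈ Hit m'}) = ⟨j₁, hjm⟩ := Subtype.ext rfl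
        have hjj2 : (⟨j₁', hj₁mem'⟩ : {jj : Fin 4 // jj ∈ Hit m'}) = ⟨j₁', hj'm⟩ :=
          Subtype.ext rfl
        have hg' : g' = g := hgu g' ⟨by rw [hgi, hjj1], by rw [hgi', hjj2]⟩
        rw [hg']
      · rw [hCfill j₂ h₂ i] at hw1
        rw [hCfill j₂ h₂ i'] at hw2
        exfalso
        apply hjj
        obtain ⟨e1, -⟩ := Sigma.mk.inj_iff.mp (Sum.inr_injective hw1)
        obtain ⟨e2, -⟩ := Sigma.mk.inj_iff.mp (Sum.inr_injective hw2)
        rw [← e1, ← e2]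
  have caseIIS : ∀ (i i' : Fin k), i ≠ i' → ∀ (j : Fin 4) (cl cl' : Fin (u j)),
      ∃! w : ι, C w i = Sum.inr ⟨j, cl⟩ ∧ C w i' = Sum.inr ⟨j, cl'⟩ := by
    intro i i' hii j cl cl'
    obtain ⟨h, ⟨hh1, hh2⟩, hhu⟩ := hGf j i i' hii cl cl'
    refine ⟨Sum.inr ⟨j, h⟩, ⟨?_, ?_⟩, ?_⟩
    · rw [hCfill j h i, hh1]
    · rw [hCfill j h i', hh2]
    · rintro (⟨m', g'⟩ | ⟨j₂, h₂⟩) ⟨hw1, hw2⟩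
      · exfalso
        rcases hgi : GI m' g' i with a₂ | jj
        case inl => rw [hCmain m' g' i a₂ hgi] at hw1; exact absurd hw1 (by simp)
        rcases hgi' : GI m' g' i' with a₂' | jj'
        case inl => rw [hCmain m' g' i' a₂' hgi'] at hw2; exact absurd hw2 (by simp)
        rw [hCinf m' g' i jj hgi] at hw1
        rw [hCinf m' g' i' jj' hgi'] at hw2
        obtain ⟨j₁, hj₁mem⟩ := jj
        obtain ⟨j₁', hj₁mem'⟩ := jj'
        obtain ⟨e1, -⟩ := Sigma.mk.inj_iff.mp (Sum.inr_injective hw1)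
        obtain ⟨e2, -⟩ := Sigma.mk.inj_iff.mp (Sum.inr_injective hw2)
        have hjj' : (⟨j₁', hj₁mem'⟩ : {jj : Fin 4 // jj ∈ Hit m'}) = ⟨j₁, hj₁mem⟩ :=
          Subtype.ext (by rw [e1, e2])
        exact hP2 m' i i' hii ⟨j₁, hj₁mem⟩ g' ⟨hgi, by rw [hgi', hjj']⟩
      · rw [hCfill j₂ h₂ i] at hw1
        rw [hCfill j₂ h₂ i'] at hw2
        obtain ⟨e1, ev1⟩ := Sigma.mk.inj_iff.mp (Sum.inr_injective hw1)
        obtain ⟨e2, ev2⟩ := Sigma.mk.inj_iff.mp (Sum.inr_injective hw2)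
        subst e1
        have hveq1 : Gf j₂ h₂ i = cl := eq_of_heq ev1
        have hveq2 : Gf j₂ h₂ i' = cl' := eq_of_heq ev2
        have hh' : h₂ = h := hhu h₂ ⟨hveq1, hveq2⟩
        rw [hh']
  refine ⟨Ω, ι, inferInstance, hcardΩ, C, ?_⟩
  intro i i' hii P Q
  rcases P with ⟨y, a⟩ | ⟨j, cl⟩ <;> rcases Q with ⟨y', a'⟩ | ⟨j', cl'⟩
  · exact caseMM i i' hii y y' a a'
  · exact caseMI i i' hii y a j' cl'
  · exact exuniq_swap (caseMI i' i (Ne.symm hii) y' a' j cl)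
  · by_cases hjj : j = j'
    · subst hjj
      exact caseIIS i i' hii j cl cl'
    · exact caseIID i i' hii j cl j' cl' hjj

end Master

section Assembly

/-- primorial-type product of all primes below `B`. -/
def Pr (B : ℕ) : ℕ := ∏ p ∈ (Finset.range B).filter Nat.Prime, p

lemma Pr_pos (B : ℕ) : 1 ≤ Pr B := by
  apply Finset.one_le_prod'
  intro p hp
  simp only [Finset.mem_filter] at hp
  exact hp.2.pos

lemma prime_dvd_Pr {B p : ℕ} (hp : p.Prime) (hpB : p < B) : p ∣ Pr B := by
  apply Finset.dvd_prod_of_mem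
  simp only [Finset.mem_filter, Finset.mem_range]
  exact ⟨hpB, hp⟩

theorem tdex_all_large (k : ℕ) (hk : 2 ≤ k) : ∃ N₀ : ℕ, ∀ n : ℕ, N₀ < n → TDex k n := by
  classical
  -- the run base A from the MacNeish triple at level k+1
  set y := (xhat (k+1)) ^ (k+1) with hy
  have hy8 : 8 ≤ y := by
    have h1 : 2 ^ (k+1) ≤ y := Nat.pow_le_pow_left (xhat_ge_two (k+1)) (k+1)
    have h2 : 2 ^ 3 ≤ 2 ^ (k+1) := Nat.pow_le_pow_right (by omega) (by omega)
    omega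
  set A := y - 3 with hA
  have hA2 : A + 2 = y - 1 := by omega
  have hA3 : A + 3 = y := by omega
  have hA4 : A + 4 = y + 1 := by omega
  have hI2 : TDex (k+1) (A+2) := by
    rw [hA2]
    exact tdex_of_allCompBig _ (by omega) (allCompBig_xhat_pow_sub_one (by omega))
  have hI3 : TDex (k+1) (A+3) := by
    rw [hA3, hy]
    exact tdex_of_allCompBig _ (by omega) (allCompBig_xhat_pow (by omega))
  have hI4 : TDex (k+1) (A+4) := by
    rw [hA4, hy]
    exact tdex_of_allCompBig _ (by omega) (allCompBig_xhat_pow_add_one (by omega))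
  set P4 := Pr (k+5) with hP4
  have hP4pos : 1 ≤ P4 := Pr_pos _
  set B := Ubound k + 2 with hB
  set D := (A+2) * P4 with hD
  have hDpos : 1 ≤ D := by
    have : 1 ≤ A + 2 := by omega
    calc 1 = 1 * 1 := by omega
    _ ≤ (A+2) * P4 := Nat.mul_le_mul this hP4pos
  refine ⟨2*(B+D)*D + B + A + 2, ?_⟩
  intro n hn
  set n' := n - B - (A+2) with hn'
  have hn'big : 2*(B+D)*D ≤ n' := by omega
  have hnsum : n' + B + (A+2) = n := by omega
  set q := n' / D with hq
  set t := q * P4 + 1 with ht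
  have hqD : D * q ≤ n' := by
    rw [hq, Nat.mul_comm]
    exact Nat.div_mul_le_self n' D
  have hn'ub : n' < D * q + D := by
    have h1 : D * q + n' % D = n' := by rw [hq]; exact Nat.div_add_mod n' D
    have h2 : n' % D < D := Nat.mod_lt _ (by omega)
    omega
  have hqlb : 2*(B+D) ≤ q := by
    rw [hq, Nat.le_div_iff_mul_le (show 0 < D by omega)]
    exact hn'big
  have htq : q ≤ t := by
    rw [ht]
    calc q = q * 1 := (Nat.mul_one q).symm
    _ ≤ q * P4 := Nat.mul_le_mul_left q hP4pos
    _ ≤ q * P4 + 1 := by omega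
  have hAt : (A+2) * t = D * q + (A+2) := by
    rw [ht, hD]; ring
  have hAtn : (A+2) * t + B ≤ n := by
    rw [hAt]; omega
  set x := n - (A+2) * t with hx
  have hxB : B ≤ x := by omega
  have hxub : x < B + D := by
    rw [hx, hAt]; omega
  have h2xt : 2 * x ≤ t := by
    have h1 : 2 * x ≤ 2 * (B + D) - 2 := by omega
    omega
  have hxn : (A+2) * t + x = n := by omega
  -- t is (k+4)-rough
  have hrough : AllCompBig (k+4) t := by
    apply allCompBig_of_coprime_primorial (by omega)
    intro p hp hpk4 hpd
    have hpP4 : p ∣ P4 := prime_dvd_Pr hp (by omega)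
    have hqP4 : p ∣ q * P4 := hpP4.mul_left q
    have hpt : p ∣ q * P4 + 1 := by rw [← ht]; exact hpd
    have h1 : p ∣ 1 := (Nat.dvd_add_right hqP4).mp hpt
    have := Nat.le_of_dvd (by omega) h1
    have := hp.two_le
    omega
  have hM : TDex (k+4) t := tdex_of_allCompBig t (by omega) hrough
  have ftt : TDex k t := hM.mono (by omega)
  obtain ⟨u₂, u₃, hsum, hu₂1, hu₃1, hu₂U, hcb2, hcb3⟩ :=
    exists_pair_decomp k x (by omega)
  have hu₂t : u₂ ≤ t := by omega
  have hu₃t : u₃ ≤ t := by omega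
  have f2 : TDex k u₂ := tdex_of_allCompBig u₂ hu₂1 hcb2
  have f3 : TDex k u₃ := tdex_of_allCompBig u₃ hu₃1 hcb3
  have htd := master_td k A t u₂ u₃ (by omega) hu₂1 hu₂t hu₃1 hu₃t hM hI2 hI3 hI4 ftt f2 f3
  have hexp : (A+2)*t = A*t + t + t := by ring
  have hfin : A*t + t + t + u₂ + u₃ = n := by omega
  rw [hfin] at htd
  exact htd

end Assembly

open SimpleGraph Finset

/-- An embedded `K_{a_1,…,a_k}`-decomposition of `K_{p·a_1,…,p·a_k}`:
there are partitions of each vertex class `V_i = Fin p × Fin (a i)` into `p` cells of size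
`a i` (given by a labelling `part i : V_i → Fin p`), and an edge decomposition of the
complete multipartite graph `K_{p·a_1,…,p·a_k}` into copies of `K_{a_1,…,a_k}` such that,
for each copy, its `i`-th partite class coincides with one of the cells of `V_i`. -/
def HasEmbeddedDecomposition (k p : ℕ) (a : Fin k → ℕ) : Prop :=
  ∃ part : (i : Fin k) → (Fin p × Fin (a i)) → Fin p,
    (∀ i j, {x : Fin p × Fin (a i) | part i x = j}.ncard = a i) ∧
    ∃ (ι : Type) (c : ι → (Σ i : Fin k, Fin (a i)) → (Σ i : Fin k, Fin p × Fin (a i))),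
      (∀ t, Function.Injective (c t)) ∧
      (∀ t (i : Fin k) (x : Fin (a i)), (c t ⟨i, x⟩).1 = i) ∧
      (∀ t (i : Fin k), ∃ j : Fin p,
        {y : Fin p × Fin (a i) | part i y = j} =
          {y : Fin p × Fin (a i) | ∃ x : Fin (a i), c t ⟨i, x⟩ = ⟨i, y⟩}) ∧
      ∀ e ∈ (completeMultipartiteGraph fun i : Fin k => Fin p × Fin (a i)).edgeSet,
        ∃! t : ι, ∃ u v, (completeMultipartiteGraph fun i : Fin k => Fin (a i)).Adj u v ∧
          e = s(c t u, c t v)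

lemma hasEmbedded_of_tdex (k p : ℕ) (a : Fin k → ℕ) (h : TDex k p) :
    HasEmbeddedDecomposition k p a := by
  classical
  obtain ⟨ι, F, hF⟩ := h.toCarrier (Fin p) (by simp)
  refine ⟨fun i x => x.1, ?_, ι, fun t s => ⟨s.1, (F t s.1, s.2)⟩, ?_, ?_, ?_, ?_⟩
  · -- cells have size a i
    intro i j
    have hseteq : {x : Fin p × Fin (a i) | x.1 = j} =
        Set.range (fun v : Fin (a i) => (j, v)) := by
      ext x
      simp only [Set.mem_setOf_eq, Set.mem_range]
      constructor
      · intro h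
        exact ⟨x.2, Prod.ext_iff.mpr ⟨h.symm, rfl⟩⟩
      · rintro ⟨v, rfl⟩
        rfl
    have hinj : Function.Injective (fun v : Fin (a i) => (j, v)) := by
      intro v w h
      exact congrArg Prod.snd h
    show {x : Fin p × Fin (a i) | x.1 = j}.ncard = a i
    rw [hseteq, ← Set.image_univ, Set.ncard_image_of_injective _ hinj, Set.ncard_univ,
      Nat.card_eq_fintype_card, Fintype.card_fin]
  · -- injectivity of copies
    intro t s s' h
    obtain ⟨i, x⟩ := s
    obtain ⟨i', x'⟩ := s'
    obtain ⟨hi, hv⟩ := Sigma.mk.inj_iff.mp h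
    subst hi
    have hxx : (F t i, x) = (F t i, x') := eq_of_heq hv
    have : x = x' := congrArg Prod.snd hxx
    rw [this]
  · intro t i x
    rfl
  · -- classes are cells
    intro t i
    refine ⟨F t i, ?_⟩
    ext y
    simp only [Set.mem_setOf_eq]
    constructor
    · intro h
      refine ⟨y.2, ?_⟩
      have : (F t i, y.2) = y := Prod.ext_iff.mpr ⟨h.symm, rfl⟩
      rw [this]
    · rintro ⟨x, hx⟩
      obtain ⟨-, hv⟩ := Sigma.mk.inj_iff.mp hx
      have : (F t i, x) = y := eq_of_heq hv
      rw [← this]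
  · -- exact edge decomposition
    intro e he
    induction e using Sym2.ind with
    | _ V W =>
      rw [SimpleGraph.mem_edgeSet] at he
      obtain ⟨i, v⟩ := V
      obtain ⟨i', w⟩ := W
      have hii : i ≠ i' := he
      obtain ⟨t₀, ⟨ht1, ht2⟩, htu⟩ := hF i i' hii v.1 w.1
      refine ⟨t₀, ⟨⟨i, v.2⟩, ⟨i', w.2⟩, hii, ?_⟩, ?_⟩
      · have e1 : (F t₀ i, v.2) = v := Prod.ext_iff.mpr ⟨ht1, rfl⟩
        have e2 : (F t₀ i', w.2) = w := Prod.ext_iff.mpr ⟨ht2, rfl⟩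
        show s(_, _) = s((⟨i, (F t₀ i, v.2)⟩ : Σ i : Fin k, Fin p × Fin (a i)),
          (⟨i', (F t₀ i', w.2)⟩ : Σ i : Fin k, Fin p × Fin (a i)))
        rw [e1, e2]
      · rintro t' ⟨U, W', hadj, heq⟩
        obtain ⟨iU, xU⟩ := U
        obtain ⟨iW, xW⟩ := W'
        rw [Sym2.eq_iff] at heq
        apply htu
        rcases heq with ⟨h1, h2⟩ | ⟨h1, h2⟩
        · obtain ⟨hi1, hv1⟩ := Sigma.mk.inj_iff.mp h1
          obtain ⟨hi2, hv2⟩ := Sigma.mk.inj_iff.mp h2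
          subst hi1
          subst hi2
          have e1 : v = (F t' i, xU) := eq_of_heq hv1
          have e2 : w = (F t' i', xW) := eq_of_heq hv2
          exact ⟨by rw [e1], by rw [e2]⟩
        · obtain ⟨hi1, hv1⟩ := Sigma.mk.inj_iff.mp h1
          obtain ⟨hi2, hv2⟩ := Sigma.mk.inj_iff.mp h2
          subst hi1
          subst hi2
          have e1 : v = (F t' i, xW) := eq_of_heq hv1
          have e2 : w = (F t' i', xU) := eq_of_heq hv2
          exact ⟨by rw [e1], by rw [e2]⟩

/-- For fixed `k ≥ 2` and `a_1,…,a_k ≥ 1` there is a threshold `p₀` such that for every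
`p > p₀` the complete multipartite graph `K_{p·a_1,…,p·a_k}` has an embedded
`K_{a_1,…,a_k}`-decomposition. -/
theorem embedded_decomposition_exists_for_large_p (k : ℕ) (hk : 2 ≤ k)
    (a : Fin k → ℕ) (ha : ∀ i, 1 ≤ a i) :
    ∃ p₀ : ℕ, ∀ p : ℕ, p₀ < p → HasEmbeddedDecomposition k p a := by
  obtain ⟨N₀, hN⟩ := tdex_all_large k hk
  exact ⟨N₀, fun p hp => hasEmbedded_of_tdex k p a (hN p hp)⟩
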